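/- The winning set W(D) of the Dyck language D is not context-free. -/

import Mathlib

/-- Left derivative: `lderiv s T = {v | s :: v ∈ T}`. -/
def lderiv (s : Bool) (T : Set (List Bool)) : Set (List Bool) := {v | s :: v ∈ T}

/-- Winning-set membership. Turn orders are lists over `Bool` with
`false` = A (Alice) and `true` = B (Bob), so that `A < B`. -/
def winW : List Bool → Set (List Bool) → Prop
  | [], T => [] ∈ T
  | (false :: v), T => winW v (lderiv false T) ∨ winW v (lderiv true T)
  | (true :: v), T => winW v (lderiv false T) ∧ winW v (lderiv true T)

/-- The winning set of a binary language. -/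
def winningSet (T : Set (List Bool)) : Set (List Bool) := {w | winW w T}

/-- The Dyck language of balanced parentheses (`false` = open, `true` = close). -/
def IsDyck (v : List Bool) : Prop :=
  v.count false = v.count true ∧ ∀ p : List Bool, p <+: v → p.count true ≤ p.count false

namespace WDyck
open ContextFreeGrammar

universe uT uN
variable {T : Type uT}

/-- Size-indexed parse relation: `Gen g n s w` means the sentential form `s`
derives the terminal word `w` via a parse forest with `n` rule applications. -/
inductive Gen (g : ContextFreeGrammar.{uT} T) : ℕ → List (Symbol T g.NT) → List T → Prop
  | nil : Gen g 0 [] []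
  | term {n : ℕ} {s : List (Symbol T g.NT)} {w : List T} (a : T) (h : Gen g n s w) :
      Gen g n (Symbol.terminal a :: s) (a :: w)
  | nt {m n : ℕ} {s : List (Symbol T g.NT)} {u w : List T} (r : ContextFreeRule T g.NT)
      (hr : r ∈ g.rules) (ho : Gen g m r.output u) (hs : Gen g n s w) :
      Gen g (m + n + 1) (Symbol.nonterminal r.input :: s) (u ++ w)

variable {g : ContextFreeGrammar.{uT} T}

lemma Gen.append {n₁ n₂ : ℕ} {s₁ s₂ : List (Symbol T g.NT)} {w₁ w₂ : List T}
    (h₁ : Gen g n₁ s₁ w₁) (h₂ : Gen g n₂ s₂ w₂) : Gen g (n₁ + n₂) (s₁ ++ s₂) (w₁ ++ w₂) := by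
  induction h₁ with
  | nil => simpa using h₂
  | term a h ih => exact Gen.term a ih
  | @nt m n s u w r hr ho hs ih1 ih2 =>
      have h3 := Gen.nt r hr ho ih2
      rw [show m + n + 1 + n₂ = m + (n + n₂) + 1 from by omega, List.append_assoc]
      exact h3

lemma Gen.nil_inv {n : ℕ} {w : List T} (h : Gen g n [] w) : n = 0 ∧ w = [] := by
  cases h; exact ⟨rfl, rfl⟩

lemma Gen.term_inv {n : ℕ} {a : T} {s : List (Symbol T g.NT)} {w : List T}
    (h : Gen g n (Symbol.terminal a :: s) w) : ∃ w', w = a :: w' ∧ Gen g n s w' := by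
  cases h with
  | term _ h => exact ⟨_, rfl, h⟩

lemma Gen.nt_inv {n : ℕ} {X : g.NT} {s : List (Symbol T g.NT)} {w : List T}
    (h : Gen g n (Symbol.nonterminal X :: s) w) :
    ∃ m k u w' r, n = m + k + 1 ∧ w = u ++ w' ∧ r ∈ g.rules ∧ r.input = X ∧
      Gen g m r.output u ∧ Gen g k s w' := by
  cases h with
  | nt r hr ho hs => exact ⟨_, _, _, _, r, rfl, rfl, hr, rfl, ho, hs⟩

lemma Gen.split {s₁ s₂ : List (Symbol T g.NT)} :
    ∀ {n : ℕ} {w : List T}, Gen g n (s₁ ++ s₂) w →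
    ∃ n₁ n₂ w₁ w₂, n = n₁ + n₂ ∧ w = w₁ ++ w₂ ∧ Gen g n₁ s₁ w₁ ∧ Gen g n₂ s₂ w₂ := by
  induction s₁ with
  | nil => intro n w h; exact ⟨0, n, [], w, by omega, by simp, Gen.nil, h⟩
  | cons e t ih =>
      intro n w h
      match e with
      | Symbol.terminal a =>
          obtain ⟨w', rfl, h'⟩ := Gen.term_inv h
          obtain ⟨n₁, n₂, w₁, w₂, rfl, rfl, hg₁, hg₂⟩ := ih h'
          exact ⟨n₁, n₂, a :: w₁, w₂, rfl, rfl, Gen.term a hg₁, hg₂⟩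
      | Symbol.nonterminal X =>
          obtain ⟨m, k, u, w', r, rfl, rfl, hr, hX, ho, hs⟩ := Gen.nt_inv h
          obtain ⟨n₁, n₂, w₁, w₂, rfl, rfl, hg₁, hg₂⟩ := ih hs
          exact ⟨m + n₁ + 1, n₂, u ++ w₁, w₂, by omega, by simp,
            by subst hX; exact Gen.nt r hr ho hg₁, hg₂⟩

lemma Gen.self (w : List T) : Gen g 0 (List.map Symbol.terminal w) w := by
  induction w with
  | nil => exact Gen.nil
  | cons a t ih => exact Gen.term a ih

lemma Gen.derives {n : ℕ} {s : List (Symbol T g.NT)} {w : List T} (h : Gen g n s w) :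
    g.Derives s (List.map Symbol.terminal w) := by
  induction h with
  | nil => simp [Derives.refl]
  | term a h ih => simpa using ih.append_left [Symbol.terminal a]
  | @nt m n s u w r hr ho hs iho ihs =>
      have h1 : g.Derives (Symbol.nonterminal r.input :: s) (r.output ++ s) := by
        refine Produces.single ⟨r, hr, ?_⟩
        simpa using ContextFreeRule.Rewrites.input_output.append_right s
      rw [List.map_append]
      refine h1.trans ((iho.append_right s).trans ?_)
      exact ihs.append_left (List.map Symbol.terminal _)

lemma Gen.of_produces {s t : List (Symbol T g.NT)} {w : List T} (hp : g.Produces s t)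
    {n : ℕ} (h : Gen g n t w) : ∃ m, Gen g m s w := by
  obtain ⟨r, hr, hrw⟩ := hp
  obtain ⟨p, q, rfl, rfl⟩ := hrw.exists_parts
  rw [List.append_assoc] at h
  obtain ⟨n₁, n₂, w₁, w₂, _, rfl, hg₁, hg₂⟩ := Gen.split (s₁ := p) h
  obtain ⟨m₁, m₂, u₁, u₂, _, rfl, hgo, hgq⟩ := Gen.split (s₁ := r.output) hg₂
  refine ⟨n₁ + (m₁ + m₂ + 1), ?_⟩
  rw [List.append_assoc]
  exact Gen.append hg₁ (Gen.nt r hr hgo hgq)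

lemma Gen.of_derives {s t : List (Symbol T g.NT)} (hd : g.Derives s t) :
    ∀ {w : List T} {n : ℕ}, Gen g n t w → ∃ m, Gen g m s w := by
  induction hd using Relation.ReflTransGen.head_induction_on with
  | refl => exact fun h => ⟨_, h⟩
  | head hp _ ih =>
      intro w n h
      obtain ⟨m, hm⟩ := ih h
      exact Gen.of_produces hp hm

lemma exists_gen_of_derives {w : List T} {s : List (Symbol T g.NT)}
    (hd : g.Derives s (List.map Symbol.terminal w)) : ∃ n, Gen g n s w :=
  Gen.of_derives hd (Gen.self w)

/-- Nonterminal extracted from a symbol. -/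
def symNT : Symbol T g.NT → Option g.NT
  | Symbol.terminal _ => none
  | Symbol.nonterminal X => some X

/-- All nonterminals occurring in the rules. -/
noncomputable def allNT (g : ContextFreeGrammar.{uT} T) : Finset g.NT :=
  letI := Classical.decEq g.NT
  g.rules.biUnion fun r => insert r.input (r.output.filterMap symNT).toFinset

lemma input_mem_allNT {r : ContextFreeRule T g.NT} (hr : r ∈ g.rules) :
    r.input ∈ allNT g := by
  classical
  unfold allNT
  rw [Finset.mem_biUnion]
  exact ⟨r, hr, by convert Finset.mem_insert_self r.input _⟩

/-- Branching bound. -/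
noncomputable def bnd (g : ContextFreeGrammar.{uT} T) : ℕ :=
  1 + g.rules.sup fun r => r.output.length

lemma one_le_bnd : 1 ≤ bnd g := Nat.le_add_right 1 _

lemma output_le_bnd {r : ContextFreeRule T g.NT} (hr : r ∈ g.rules) :
    r.output.length ≤ bnd g :=
  le_trans (Finset.le_sup (f := fun r => r.output.length) hr) (Nat.le_add_left _ 1)

/-- `k`-fold repetition of a word. -/
def repW {α : Type*} : ℕ → List α → List α
  | 0, _ => []
  | k+1, v => v ++ repW k v

lemma repW_succ' {α : Type*} (k : ℕ) (v : List α) : repW (k+1) v = repW k v ++ v := by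
  induction k with
  | zero => simp [repW]
  | succ k ih =>
      show v ++ repW (k+1) v = repW (k+1) v ++ v
      conv_lhs => rw [ih]
      simp [show repW (k+1) v = v ++ repW k v from rfl, List.append_assoc]

lemma derives_pump {A : g.NT} {v y : List T}
    (h : g.Derives [Symbol.nonterminal A]
      (List.map Symbol.terminal v ++ [Symbol.nonterminal A] ++ List.map Symbol.terminal y)) :
    ∀ k, g.Derives [Symbol.nonterminal A]
      (List.map Symbol.terminal (repW k v) ++ [Symbol.nonterminal A] ++
        List.map Symbol.terminal (repW k y)) := by
  intro k
  induction k with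
  | zero => simp [repW, Derives.refl]
  | succ k ih =>
      have h2 := (ih.append_left (List.map Symbol.terminal v)).append_right
        (List.map Symbol.terminal y)
      have h3 := h.trans (by simpa [List.append_assoc] using h2)
      rw [show repW (k+1) v = v ++ repW k v from rfl, repW_succ' k y]
      simpa [List.map_append, List.append_assoc] using h3

lemma Gen.maxchild : ∀ {s : List (Symbol T g.NT)} {n : ℕ} {w : List T}, Gen g n s w → w = [] ∨
    ∃ (s₁ : List (Symbol T g.NT)) (e : Symbol T g.NT) (s₂ : List (Symbol T g.NT))
      (p wc q : List T) (m₁ mc m₂ : ℕ), s = s₁ ++ e :: s₂ ∧ w = p ++ wc ++ q ∧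
      Gen g m₁ s₁ p ∧ Gen g mc [e] wc ∧ Gen g m₂ s₂ q ∧ n = m₁ + mc + m₂ ∧
      w.length ≤ s.length * wc.length := by
  intro s
  induction s with
  | nil => intro n w h; exact Or.inl (Gen.nil_inv h).2
  | cons e t ih =>
      intro n w h
      have hhead : ∃ mh wh k w', w = wh ++ w' ∧ n = mh + k ∧ Gen g mh [e] wh ∧ Gen g k t w' := by
        match e with
        | Symbol.terminal a =>
            obtain ⟨w', rfl, h'⟩ := Gen.term_inv h
            exact ⟨0, [a], n, w', rfl, by omega, Gen.term a Gen.nil, h'⟩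
        | Symbol.nonterminal X =>
            obtain ⟨m, k, u, w', r, rfl, rfl, hr, hX, ho, hs⟩ := Gen.nt_inv h
            have hone : Gen g (m + 0 + 1) [Symbol.nonterminal X] (u ++ []) :=
              hX ▸ Gen.nt r hr ho Gen.nil
            exact ⟨m + 0 + 1, u, k, w', rfl, by omega, by simpa using hone, hs⟩
      obtain ⟨mh, wh, k, w', rfl, rfl, hh, ht⟩ := hhead
      rcases ih ht with rfl | ⟨t₁, e', t₂, p, wc, q, m₁, mc, m₂, hteq, hw'eq, hg₁, hgc, hg₂, hk, hl⟩
      · rcases List.eq_nil_or_concat wh with rfl | _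
        · exact Or.inl (by simp)
        · refine Or.inr ⟨[], e, t, [], wh, [], 0, mh, k, by simp, by simp, Gen.nil, hh,
            ht, by omega, ?_⟩
          rw [List.append_nil, List.length_cons, Nat.succ_mul]
          omega
      · by_cases hcmp : wh.length ≤ wc.length
        · refine Or.inr ⟨e :: t₁, e', t₂, wh ++ p, wc, q, mh + m₁, mc, m₂, by rw [hteq]; rfl,
            by rw [hw'eq]; simp [List.append_assoc], by simpa using Gen.append hh hg₁,
            hgc, hg₂, by omega, ?_⟩
          rw [List.length_append, List.length_cons, Nat.succ_mul]
          omega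
        · refine Or.inr ⟨[], e, t, [], wh, w', 0, mh, k, by simp, by simp, Gen.nil, hh, ht,
            by omega, ?_⟩
          have h2 : w'.length ≤ t.length * wh.length :=
            le_trans hl (Nat.mul_le_mul_left _ (by omega))
          rw [List.length_append, List.length_cons, Nat.succ_mul]
          omega

end WDyck
namespace WDyck
open ContextFreeGrammar

universe uT uN
variable {T : Type uT} {g : ContextFreeGrammar.{uT} T}

theorem pump_main (n : ℕ) : ∀ (X : g.NT) (w : List T), Gen g n [Symbol.nonterminal X] w →
    (∃ u v x y z, w = u ++ v ++ x ++ y ++ z ∧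
      (v ++ x ++ y).length ≤ bnd g ^ ((allNT g).card + 1) ∧
      (∃ m, m < n ∧ Gen g m [Symbol.nonterminal X] (u ++ x ++ z)) ∧
      (∀ k, ∃ m, Gen g m [Symbol.nonterminal X] (u ++ repW k v ++ x ++ repW k y ++ z))) ∨
    (∃ S : Finset g.NT, X ∈ S ∧ S ⊆ allNT g ∧ w.length ≤ bnd g ^ S.card ∧
      ∀ Y ∈ S, ∃ p q w' m, w = p ++ w' ++ q ∧ m ≤ n ∧ Gen g m [Symbol.nonterminal Y] w' ∧
        g.Derives [Symbol.nonterminal X]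
          (List.map Symbol.terminal p ++ [Symbol.nonterminal Y] ++ List.map Symbol.terminal q)) := by
  classical
  induction n using Nat.strong_induction_on with
  | _ n IH =>
  intro X w h
  -- a "small" answer used in several cases
  have hsmall : w.length ≤ bnd g ^ 1 →
      (∃ S : Finset g.NT, X ∈ S ∧ S ⊆ allNT g ∧ w.length ≤ bnd g ^ S.card ∧
      ∀ Y ∈ S, ∃ p q w' m, w = p ++ w' ++ q ∧ m ≤ n ∧ Gen g m [Symbol.nonterminal Y] w' ∧
        g.Derives [Symbol.nonterminal X]
          (List.map Symbol.terminal p ++ [Symbol.nonterminal Y] ++ List.map Symbol.terminal q)) := by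
    intro hlen
    obtain ⟨m₀, k₀, u₀, w', r, hn, hw, hr, hXr, ho, hs⟩ := Gen.nt_inv h
    refine ⟨{X}, Finset.mem_singleton_self X, ?_, by simpa using hlen, ?_⟩
    · intro Y hY
      rw [Finset.mem_singleton] at hY
      subst hY
      exact hXr ▸ input_mem_allNT hr
    · intro Y hY
      rw [Finset.mem_singleton] at hY
      subst hY
      exact ⟨[], [], w, n, by simp, le_refl n, h, by simpa using Derives.refl _⟩
  obtain ⟨m₀, k₀, w, wnil, r, hn, hw, hr, hXr, ho, hnil⟩ := Gen.nt_inv h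
  obtain ⟨hk₀, rfl⟩ := Gen.nil_inv hnil
  subst hk₀
  rw [List.append_nil] at hw
  subst hw
  rcases Gen.maxchild ho with rfl | ⟨s₁, e, s₂, p, wc, q, m₁, mc, m₂, hso, hwpq, hg₁, hgc, hg₂, hms, hlen⟩
  · exact Or.inr (hsmall (by simp))
  -- context derivation through the chosen child position
  match e with
  | Symbol.terminal a =>
      obtain ⟨wc', hwc', hgc'⟩ := Gen.term_inv hgc
      obtain ⟨_, rfl⟩ := Gen.nil_inv hgc'
      refine Or.inr (hsmall ?_)
      have h1 : w.length ≤ r.output.length * 1 := by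
        subst hwc'; simpa using hlen
      have := output_le_bnd hr
      simpa using le_trans h1 (by omega)
  | Symbol.nonterminal Z =>
      have hmc : mc < n := by omega
      have hctx : g.Derives [Symbol.nonterminal X]
          (List.map Symbol.terminal p ++ [Symbol.nonterminal Z] ++ List.map Symbol.terminal q) := by
        have h1 : g.Derives [Symbol.nonterminal X] r.output := by
          refine Produces.single ⟨r, hr, ?_⟩
          subst hXr
          exact ContextFreeRule.Rewrites.input_output
        have h2 : g.Derives r.output
            (List.map Symbol.terminal p ++ (Symbol.nonterminal Z :: s₂)) := by
          rw [hso]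
          simpa using (Gen.derives hg₁).append_right (Symbol.nonterminal Z :: s₂)
        have h3 : g.Derives (List.map Symbol.terminal p ++ (Symbol.nonterminal Z :: s₂))
            (List.map Symbol.terminal p ++ (Symbol.nonterminal Z :: List.map Symbol.terminal q)) := by
          have := (Gen.derives hg₂).append_left
            (List.map Symbol.terminal p ++ [Symbol.nonterminal Z])
          simpa [List.append_assoc] using this
        have := (h1.trans h2).trans h3
        simpa [List.append_assoc] using this
      -- a helper to wrap a Gen for r.output back into one for X
      have hwrap : ∀ (msub : ℕ) (wsub : List T), Gen g msub [Symbol.nonterminal Z] wsub →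
          ∃ mm, mm = m₁ + msub + m₂ + 1 ∧ Gen g mm [Symbol.nonterminal X] (p ++ wsub ++ q) := by
        intro msub wsub hsub
        have hfull : Gen g (m₁ + (msub + m₂)) (s₁ ++ ([Symbol.nonterminal Z] ++ s₂))
            (p ++ (wsub ++ q)) := Gen.append hg₁ (Gen.append hsub hg₂)
        rw [List.singleton_append, ← hso] at hfull
        have h9 := Gen.nt r hr hfull Gen.nil
        rw [hXr, show m₁ + (msub + m₂) + 0 + 1 = m₁ + msub + m₂ + 1 from by omega] at h9
        exact ⟨m₁ + msub + m₂ + 1, rfl, by simpa [List.append_assoc] using h9⟩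
      rcases IH mc hmc Z wc hgc with ⟨u', v', x', y', z', hwc, hwin, ⟨ms, hmslt, hgs⟩, hpump⟩ |
        ⟨SZ, hZS, hSsub, hlenZ, hbr⟩
      · -- closed pair found inside the child: lift it
        left
        refine ⟨p ++ u', v', x', y', z' ++ q, ?_, hwin, ?_, ?_⟩
        · rw [hwpq, hwc]; simp [List.append_assoc]
        · obtain ⟨mm, hmm, hgm⟩ := hwrap ms _ hgs
          exact ⟨mm, by omega, by simpa [List.append_assoc] using hgm⟩
        · intro k
          obtain ⟨mk, hgk⟩ := hpump k
          obtain ⟨mm, _, hgm⟩ := hwrap mk _ hgk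
          exact ⟨mm, by simpa [List.append_assoc] using hgm⟩
      · by_cases hXS : X ∈ SZ
        · -- the pair closes at this very node
          obtain ⟨p', q', w', m', hwc', hm'le, hgw', hd'⟩ := hbr X hXS
          left
          have hfullctx : g.Derives [Symbol.nonterminal X]
              (List.map Symbol.terminal (p ++ p') ++ [Symbol.nonterminal X] ++
                List.map Symbol.terminal (q' ++ q)) := by
            have h2 := (hd'.append_left (List.map Symbol.terminal p)).append_right
              (List.map Symbol.terminal q)
            refine hctx.trans ?_
            simpa [List.map_append, List.append_assoc] using h2
          refine ⟨[], p ++ p', w', q' ++ q, [], ?_, ?_, ?_, ?_⟩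
          · rw [hwpq, hwc']; simp [List.append_assoc]
          · have h4 : w.length ≤ bnd g * wc.length := by
              calc w.length ≤ r.output.length * wc.length := hlen
                _ ≤ bnd g * wc.length := Nat.mul_le_mul_right _ (output_le_bnd hr)
            have h5 : wc.length ≤ bnd g ^ (allNT g).card :=
              le_trans hlenZ (Nat.pow_le_pow_right one_le_bnd (Finset.card_le_card hSsub))
            have h7 : w.length ≤ bnd g ^ ((allNT g).card + 1) := by
              calc w.length ≤ bnd g * bnd g ^ (allNT g).card :=
                    le_trans h4 (Nat.mul_le_mul_left _ h5)
                _ = bnd g ^ ((allNT g).card + 1) := by ring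
            have hw6 : ((p ++ p') ++ w' ++ (q' ++ q)).length = w.length := by
              rw [hwpq, hwc']
              simp only [List.length_append]
              omega
            omega
          · exact ⟨m', by omega, by simpa using hgw'⟩
          · intro k
            have hdk := derives_pump hfullctx k
            have hinner : Gen g (0 + (m' + 0))
                (List.map Symbol.terminal (repW k (p ++ p')) ++ ([Symbol.nonterminal X] ++
                  List.map Symbol.terminal (repW k (q' ++ q))))
                (repW k (p ++ p') ++ (w' ++ repW k (q' ++ q))) :=
              Gen.append (Gen.self _) (Gen.append hgw' (Gen.self _))
            obtain ⟨mm, hgm⟩ := Gen.of_derives hdk (by simpa [List.append_assoc] using hinner)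
            exact ⟨mm, by simpa [List.append_assoc] using hgm⟩
        · -- extend the seen set
          right
          refine ⟨insert X SZ, Finset.mem_insert_self X SZ, ?_, ?_, ?_⟩
          · exact Finset.insert_subset (hXr ▸ input_mem_allNT hr) hSsub
          · rw [Finset.card_insert_of_notMem hXS]
            have h4 : w.length ≤ bnd g * wc.length := by
              calc w.length ≤ r.output.length * wc.length := hlen
                _ ≤ bnd g * wc.length := Nat.mul_le_mul_right _ (output_le_bnd hr)
            calc w.length ≤ bnd g * bnd g ^ SZ.card :=
                  le_trans h4 (Nat.mul_le_mul_left _ hlenZ)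
              _ = bnd g ^ (SZ.card + 1) := by ring
          · intro Y hY
            rcases Finset.mem_insert.mp hY with rfl | hY'
            · exact ⟨[], [], w, n, by simp, le_refl n, h, by simpa using Derives.refl _⟩
            · obtain ⟨p', q', w', m', hwc', hm'le, hgw', hd'⟩ := hbr Y hY'
              refine ⟨p ++ p', q' ++ q, w', m', ?_, by omega, hgw', ?_⟩
              · rw [hwpq, hwc']; simp [List.append_assoc]
              · have h2 := (hd'.append_left (List.map Symbol.terminal p)).append_right
                  (List.map Symbol.terminal q)
                refine hctx.trans ?_
                simpa [List.map_append, List.append_assoc] using h2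

/-- The pumping lemma, for words generated from a fixed nonterminal. -/
theorem cfpump (g : ContextFreeGrammar.{uT} T) (X : g.NT) :
    ∃ B, 1 ≤ B ∧ ∀ w : List T, (∃ n, Gen g n [Symbol.nonterminal X] w) → B ≤ w.length →
      ∃ u v x y z, w = u ++ v ++ x ++ y ++ z ∧ (v ≠ [] ∨ y ≠ []) ∧
        (v ++ x ++ y).length ≤ B ∧
        ∀ k, ∃ m, Gen g m [Symbol.nonterminal X] (u ++ repW k v ++ x ++ repW k y ++ z) := by
  classical
  refine ⟨bnd g ^ ((allNT g).card + 1) + 1, by omega, ?_⟩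
  intro w hex hlen
  have hn : Gen g (Nat.find hex) [Symbol.nonterminal X] w := Nat.find_spec hex
  rcases pump_main _ _ _ hn with ⟨u, v, x, y, z, hdec, hwin, ⟨m, hmlt, hshr⟩, hpump⟩ |
    ⟨S, hXS, hsub, hlen', _⟩
  · refine ⟨u, v, x, y, z, hdec, ?_, by omega, hpump⟩
    by_contra hvy
    push_neg at hvy
    obtain ⟨rfl, rfl⟩ := hvy
    rw [show u ++ [] ++ x ++ [] ++ z = u ++ x ++ z by simp] at hdec
    exact Nat.find_min hex hmlt (hdec ▸ hshr)
  · exfalso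
    have h5 : w.length ≤ bnd g ^ (allNT g).card :=
      le_trans hlen' (Nat.pow_le_pow_right one_le_bnd (Finset.card_le_card hsub))
    have h6 : bnd g ^ (allNT g).card ≤ bnd g ^ ((allNT g).card + 1) :=
      Nat.pow_le_pow_right one_le_bnd (by omega)
    omega

end WDyck
namespace WDyck
open ContextFreeGrammar

universe uT uN
section Product

variable {T : Type uT} {Q : Type} [DecidableEq Q] (g : ContextFreeGrammar.{uT} T)
  (δ : Q → T → Q) (qList : List Q)

/-- Forget the state annotations of a symbol. -/
def eraseS : Symbol T (Q × g.NT × Q) → Symbol T g.NT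
  | .terminal a => .terminal a
  | .nonterminal x => .nonterminal x.2.1

/-- `chain δ q s q'` : the annotated sentential form `s` carries a consistent
state thread from `q` to `q'`. -/
def chain : Q → List (Symbol T (Q × g.NT × Q)) → Q → Prop
  | q, [], q' => q = q'
  | q, .terminal a :: s, q' => chain (δ q a) s q'
  | q, .nonterminal x :: s, q' => q = x.1 ∧ chain x.2.2 s q'

/-- All state-consistent annotations of a sentential form. -/
def annotList : List (Symbol T g.NT) → Q → Q → List (List (Symbol T (Q × g.NT × Q)))
  | [], q, q' => if q = q' then [[]] else []
  | .terminal a :: s, q, q' => (annotList s (δ q a) q').map (.terminal a :: ·)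
  | .nonterminal X :: s, q, q' =>
      qList.flatMap fun p => (annotList s p q').map (.nonterminal (q, X, p) :: ·)

lemma mem_annotList (hq : ∀ q : Q, q ∈ qList) :
    ∀ (s : List (Symbol T g.NT)) (q q' : Q) (s' : List (Symbol T (Q × g.NT × Q))),
    s' ∈ annotList g δ qList s q q' ↔ (s'.map (eraseS g) = s ∧ chain g δ q s' q') := by
  intro s
  induction s with
  | nil =>
      intro q q' s'
      constructor
      · intro hs'
        unfold annotList at hs'
        split_ifs at hs' with hqq
        · simp at hs'
          subst hs'
          exact ⟨rfl, hqq⟩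
        · simp at hs'
      · rintro ⟨hmap, hch⟩
        rw [List.map_eq_nil_iff] at hmap
        subst hmap
        unfold annotList
        have : q = q' := hch
        simp [this]
  | cons e t ih =>
      intro q q' s'
      match e with
      | Symbol.terminal a =>
          constructor
          · intro hs'
            unfold annotList at hs'
            rw [List.mem_map] at hs'
            obtain ⟨s'', hs'', rfl⟩ := hs'
            rw [ih] at hs''
            exact ⟨by simp [eraseS, hs''.1], by simpa [chain] using hs''.2⟩
          · rintro ⟨hmap, hch⟩
            match s' with
            | [] => simp at hmap
            | Symbol.terminal b :: s'' =>
                simp [eraseS] at hmap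
                obtain ⟨rfl, hmap⟩ := hmap
                unfold annotList
                rw [List.mem_map]
                exact ⟨s'', (ih _ _ _).mpr ⟨hmap, by simpa [chain] using hch⟩, rfl⟩
            | Symbol.nonterminal x :: s'' => simp [eraseS] at hmap
      | Symbol.nonterminal X =>
          constructor
          · intro hs'
            unfold annotList at hs'
            rw [List.mem_flatMap] at hs'
            obtain ⟨p, _, hs'⟩ := hs'
            rw [List.mem_map] at hs'
            obtain ⟨s'', hs'', rfl⟩ := hs'
            rw [ih] at hs''
            exact ⟨by simp [eraseS, hs''.1], by simpa [chain] using hs''.2⟩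
          · rintro ⟨hmap, hch⟩
            match s' with
            | [] => simp at hmap
            | Symbol.terminal b :: s'' => simp [eraseS] at hmap
            | Symbol.nonterminal x :: s'' =>
                simp [eraseS] at hmap
                obtain ⟨hx, hmap⟩ := hmap
                obtain ⟨q₁, X', q₂⟩ := x
                simp at hx
                subst hx
                simp [chain] at hch
                obtain ⟨rfl, hch⟩ := hch
                unfold annotList
                rw [List.mem_flatMap]
                exact ⟨q₂, hq q₂, by
                  rw [List.mem_map]
                  exact ⟨s'', (ih _ _ _).mpr ⟨hmap, hch⟩, rfl⟩⟩

/-- Rules of the product grammar. -/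
noncomputable def prodRules : List (ContextFreeRule T (Q × g.NT × Q)) :=
  g.rules.toList.flatMap fun r => qList.flatMap fun q => qList.flatMap fun q' =>
    (annotList g δ qList r.output q q').map fun s' => ⟨(q, r.input, q'), s'⟩

/-- The product grammar of `g` with a DFA. -/
noncomputable def prodG (i : Q × g.NT × Q) : ContextFreeGrammar T :=
  letI := Classical.decEq (ContextFreeRule T (Q × g.NT × Q))
  ⟨Q × g.NT × Q, i, (prodRules g δ qList).toFinset⟩

lemma mem_prodG_rules {i : Q × g.NT × Q} {r' : ContextFreeRule T (Q × g.NT × Q)} :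
    r' ∈ (prodG g δ qList i).rules ↔
      ∃ r ∈ g.rules, ∃ q q' s', s' ∈ annotList g δ qList r.output q q' ∧
        q ∈ qList ∧ q' ∈ qList ∧ r' = ⟨(q, r.input, q'), s'⟩ := by
  classical
  letI := Classical.decEq (ContextFreeRule T (Q × g.NT × Q))
  show r' ∈ (prodRules g δ qList).toFinset ↔ _
  rw [List.mem_toFinset]
  unfold prodRules
  simp only [List.mem_flatMap, List.mem_map, Finset.mem_toList]
  constructor
  · rintro ⟨r, hr, q, hql, q', hql', s', hs', rfl⟩
    exact ⟨r, hr, q, q', s', hs', hql, hql', rfl⟩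
  · rintro ⟨r, hr, q, q', s', hs', hql, hql', rfl⟩
    exact ⟨r, hr, q, hql, q', hql', s', hs', rfl⟩

lemma prod_sound (hq : ∀ q : Q, q ∈ qList) {i : Q × g.NT × Q} {n : ℕ} {s' : List (Symbol T (Q × g.NT × Q))} {w : List T}
    (h : Gen (prodG g δ qList i) n s' w) :
    ∀ q q', chain g δ q s' q' → List.foldl δ q w = q' ∧ ∃ m, Gen g m (s'.map (eraseS g)) w := by
  change List (Symbol T (prodG g δ qList i).NT) at s'
  induction h with
  | nil => intro q q' hch; exact ⟨hch, 0, Gen.nil⟩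
  | term a h ih =>
      intro q q' hch
      obtain ⟨hrun, m, hgen⟩ := ih (δ q a) q' (by simpa [chain] using hch)
      exact ⟨by simpa using hrun, m, Gen.term a hgen⟩
  | @nt m k s u w r' hr' ho hs iho ihs =>
      intro q q' hch
      replace hr' := (mem_prodG_rules g δ qList).mp hr'
      obtain ⟨r, hr, qa, qb, s'', hs'', _, _, rfl⟩ := hr'
      simp only [chain] at hch
      obtain ⟨hqq, hch⟩ := hch
      subst hqq
      rw [mem_annotList g δ qList hq] at hs''
      obtain ⟨hmap, hchain⟩ := hs''
      obtain ⟨hrun1, m1, hgen1⟩ := iho _ qb hchain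
      obtain ⟨hrun2, m2, hgen2⟩ := ihs qb q' hch
      rw [hmap] at hgen1
      refine ⟨by rw [List.foldl_append, hrun1, hrun2], m1 + m2 + 1, ?_⟩
      exact Gen.nt r hr hgen1 hgen2

lemma prod_complete (hq : ∀ q : Q, q ∈ qList) {i : Q × g.NT × Q} {n : ℕ} {s : List (Symbol T g.NT)} {w : List T}
    (h : Gen g n s w) :
    ∀ q, ∃ s' m, s'.map (eraseS g) = s ∧ chain g δ q s' (List.foldl δ q w) ∧
      Gen (prodG g δ qList i) m s' w := by
  induction h with
  | nil => intro q; exact ⟨[], 0, rfl, rfl, Gen.nil⟩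
  | term a h ih =>
      intro q
      obtain ⟨s'', m, hmap, hch, hgen⟩ := ih (δ q a)
      exact ⟨Symbol.terminal a :: s'', m, by simp [eraseS, hmap],
        by simpa [chain] using hch, Gen.term a hgen⟩
  | @nt m k s u w r hr ho hs iho ihs =>
      intro q
      obtain ⟨o', mo, hmapo, hcho, hgeno⟩ := iho q
      obtain ⟨s'', ms, hmaps, hchs, hgens⟩ := ihs (List.foldl δ q u)
      have hr' : (⟨(q, r.input, List.foldl δ q u), o'⟩ :
          ContextFreeRule T (Q × g.NT × Q)) ∈ (prodG g δ qList i).rules := by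
        rw [mem_prodG_rules]
        exact ⟨r, hr, q, List.foldl δ q u, o',
          (mem_annotList g δ qList hq _ _ _ _).mpr ⟨hmapo, hcho⟩, hq _, hq _, rfl⟩
      refine ⟨Symbol.nonterminal (q, r.input, List.foldl δ q u) :: s'', mo + ms + 1,
        by simp [eraseS, hmaps], ?_, ?_⟩
      · refine ⟨rfl, ?_⟩
        rw [List.foldl_append]
        exact hchs
      · exact Gen.nt (⟨(q, r.input, List.foldl δ q u), o'⟩ : ContextFreeRule T (Q × g.NT × Q))
          hr' hgeno hgens

lemma prod_iff (hq : ∀ q : Q, q ∈ qList) {i : Q × g.NT × Q} (X : g.NT) (q q' : Q) (w : List T) :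
    (∃ n, Gen (prodG g δ qList i) n [Symbol.nonterminal (q, X, q')] w) ↔
      (∃ m, Gen g m [Symbol.nonterminal X] w) ∧ List.foldl δ q w = q' := by
  constructor
  · rintro ⟨n, hgen⟩
    have hch : chain g δ q [Symbol.nonterminal (q, X, q')] q' := ⟨rfl, rfl⟩
    obtain ⟨hrun, m, hgm⟩ := prod_sound g δ qList hq hgen q q' hch
    exact ⟨⟨m, hgm⟩, hrun⟩
  · rintro ⟨⟨m, hgen⟩, hrun⟩
    obtain ⟨s', m', hmap, hch, hgen'⟩ := prod_complete (i := i) g δ qList hq hgen q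
    rcases s' with _ | ⟨e, s''⟩
    · simp at hmap
    · rcases e with a | x
      · simp [eraseS] at hmap
      · obtain ⟨q₁, X', q₂⟩ := x
        have he : X' = X ∧ s'' = [] := by
          simpa [eraseS] using hmap
        obtain ⟨rfl, rfl⟩ := he
        have hc2 : q = q₁ ∧ q₂ = List.foldl δ q w := by
          simpa [chain] using hch
        obtain ⟨rfl, rfl⟩ := hc2
        rw [hrun] at hgen'
        exact ⟨m', hgen'⟩

end Product
end WDyck
namespace WDyck

/-- The win predicate over heights. -/
def Win : List Bool → ℕ → Prop
  | [], h => h = 0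
  | false :: v, h => Win v (h+1) ∨ (0 < h ∧ Win v (h-1))
  | true :: v, h => Win v (h+1) ∧ 0 < h ∧ Win v (h-1)

/-- Dyck words starting at height `h`. -/
def DyckH (h : ℕ) : Set (List Bool) :=
  {v | v.count true = h + v.count false ∧
    ∀ p : List Bool, p <+: v → p.count true ≤ h + p.count false}

lemma dyckH_zero : {v : List Bool | IsDyck v} = DyckH 0 := by
  ext v
  simp only [Set.mem_setOf_eq, IsDyck, DyckH, zero_add]
  constructor
  · rintro ⟨h1, h2⟩; exact ⟨h1.symm, h2⟩
  · rintro ⟨h1, h2⟩; exact ⟨h1.symm, h2⟩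

lemma lderiv_false_dyckH (h : ℕ) : lderiv false (DyckH h) = DyckH (h+1) := by
  ext v
  show (false :: v) ∈ DyckH h ↔ v ∈ DyckH (h+1)
  simp only [DyckH, Set.mem_setOf_eq]
  constructor
  · rintro ⟨h1, h2⟩
    simp [List.count_cons] at h1
    refine ⟨by omega, fun p hp => ?_⟩
    have h3 := h2 (false :: p) (by simpa using hp)
    simp [List.count_cons] at h3
    omega
  · rintro ⟨h1, h2⟩
    refine ⟨by simp [List.count_cons]; omega, fun p hp => ?_⟩
    rw [List.prefix_cons_iff] at hp
    rcases hp with rfl | ⟨t, rfl, ht⟩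
    · simp
    · have h3 := h2 t ht
      simp [List.count_cons]
      omega

lemma lderiv_true_dyckH (h : ℕ) : lderiv true (DyckH (h+1)) = DyckH h := by
  ext v
  show (true :: v) ∈ DyckH (h+1) ↔ v ∈ DyckH h
  simp only [DyckH, Set.mem_setOf_eq]
  constructor
  · rintro ⟨h1, h2⟩
    simp [List.count_cons] at h1
    refine ⟨by omega, fun p hp => ?_⟩
    have h3 := h2 (true :: p) (by simpa using hp)
    simp [List.count_cons] at h3
    omega
  · rintro ⟨h1, h2⟩
    refine ⟨by simp [List.count_cons]; omega, fun p hp => ?_⟩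
    rw [List.prefix_cons_iff] at hp
    rcases hp with rfl | ⟨t, rfl, ht⟩
    · simp
    · have h3 := h2 t ht
      simp [List.count_cons]
      omega

lemma lderiv_true_dyckH_zero : lderiv true (DyckH 0) = ∅ := by
  ext v
  show (true :: v) ∈ DyckH 0 ↔ v ∈ (∅ : Set (List Bool))
  simp only [DyckH, Set.mem_setOf_eq, Set.mem_empty_iff_false, iff_false]
  rintro ⟨h1, h2⟩
  have := h2 [true] ⟨v, rfl⟩
  simp at this

lemma lderiv_empty (s : Bool) : lderiv s (∅ : Set (List Bool)) = ∅ := by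
  ext v; simp [lderiv]

lemma not_winW_empty : ∀ v : List Bool, ¬ winW v ∅ := by
  intro v
  induction v with
  | nil => simp [winW]
  | cons b t ih =>
      cases b
      · intro hw
        rcases hw with hw | hw <;> rw [lderiv_empty] at hw <;> exact ih hw
      · intro hw
        obtain ⟨hw, -⟩ := hw
        rw [lderiv_empty] at hw
        exact ih hw

lemma winW_dyckH : ∀ (v : List Bool) (h : ℕ), winW v (DyckH h) ↔ Win v h := by
  intro v
  induction v with
  | nil =>
      intro h
      show [] ∈ DyckH h ↔ h = 0
      simp only [DyckH, Set.mem_setOf_eq, List.count_nil]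
      constructor
      · rintro ⟨h1, -⟩; omega
      · rintro rfl; exact ⟨by simp, by intro p hp; rw [List.prefix_nil] at hp; simp [hp]⟩
  | cons b t ih =>
      intro h
      cases b
      · show winW t (lderiv false (DyckH h)) ∨ winW t (lderiv true (DyckH h)) ↔ _
        rw [lderiv_false_dyckH, ih]
        cases h with
        | zero =>
            rw [lderiv_true_dyckH_zero]
            simp only [Win]
            constructor
            · rintro (hw | hw)
              · exact Or.inl hw
              · exact absurd hw (not_winW_empty t)
            · rintro (hw | ⟨hpos, -⟩)
              · exact Or.inl hw
              · omega
        | succ h' =>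
            rw [show h' + 1 = h' + 1 from rfl, lderiv_true_dyckH, ih]
            show _ ↔ Win t (h' + 1 + 1) ∨ (0 < h' + 1 ∧ Win t (h' + 1 - 1))
            simp only [Nat.add_sub_cancel]
            constructor
            · rintro (hw | hw)
              · exact Or.inl hw
              · exact Or.inr ⟨by omega, hw⟩
            · rintro (hw | ⟨-, hw⟩)
              · exact Or.inl hw
              · exact Or.inr hw
      · show winW t (lderiv false (DyckH h)) ∧ winW t (lderiv true (DyckH h)) ↔ _
        rw [lderiv_false_dyckH, ih]
        cases h with
        | zero =>
            rw [lderiv_true_dyckH_zero]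
            show _ ↔ Win t (0+1) ∧ 0 < 0 ∧ Win t (0-1)
            constructor
            · rintro ⟨-, hw⟩
              exact absurd hw (not_winW_empty t)
            · rintro ⟨-, h0, -⟩
              omega
        | succ h' =>
            rw [lderiv_true_dyckH, ih]
            show _ ↔ Win t (h' + 1 + 1) ∧ 0 < h' + 1 ∧ Win t (h' + 1 - 1)
            simp only [Nat.add_sub_cancel]
            constructor
            · rintro ⟨h1, h2⟩; exact ⟨h1, by omega, h2⟩
            · rintro ⟨h1, -, h2⟩; exact ⟨h1, h2⟩

lemma winningSet_eq_win : (winningSet {v : List Bool | IsDyck v}) = {w | Win w 0} := by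
  ext w
  show winW w _ ↔ _
  rw [dyckH_zero]
  exact winW_dyckH w 0

/-- The lower end of the winning-height interval. -/
def lo : List Bool → ℕ
  | [] => 0
  | false :: v => if lo v = 0 then 1 else lo v - 1
  | true :: v => lo v + 1

/-- The upper end of the winning-height interval. -/
def hi : List Bool → ℕ
  | [] => 0
  | false :: v => hi v + 1
  | true :: v => hi v - 1

/-- Nonemptyness of the winning-height interval. -/
def alive : List Bool → Prop
  | [] => True
  | false :: v => alive v
  | true :: v => alive v ∧ lo v + 2 ≤ hi v

lemma lo_le_hi : ∀ v : List Bool, alive v → lo v ≤ hi v ∧ lo v % 2 = hi v % 2 := by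
  intro v
  induction v with
  | nil => intro; simp [lo, hi]
  | cons b t ih =>
      cases b
      · intro ha
        have := ih ha
        simp only [lo, hi]
        split_ifs <;> omega
      · rintro ⟨ha, hlh⟩
        have := ih ha
        simp only [lo, hi]
        omega

lemma win_iff : ∀ (v : List Bool) (h : ℕ),
    Win v h ↔ (alive v ∧ lo v ≤ h ∧ h ≤ hi v ∧ h % 2 = lo v % 2) := by
  intro v
  induction v with
  | nil =>
      intro h
      show h = 0 ↔ _
      simp only [alive, lo, hi]
      constructor
      · rintro rfl; simp
      · rintro ⟨-, -, h2, -⟩; omega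
  | cons b t ih =>
      intro h
      cases b
      · show Win t (h+1) ∨ (0 < h ∧ Win t (h-1)) ↔ _
        rw [ih, ih]
        simp only [alive, lo, hi]
        constructor
        · rintro (⟨ha, h1, h2, h3⟩ | ⟨hpos, ha, h1, h2, h3⟩) <;>
            (refine ⟨ha, ?_, ?_, ?_⟩ <;> ((try split_ifs) <;> omega))
        · rintro ⟨ha, h1, h2, h3⟩
          obtain ⟨hinv1, hinv2⟩ := lo_le_hi t ha
          rcases Nat.lt_or_ge h (lo t) with hc | hc
          · left
            refine ⟨ha, ?_, ?_, ?_⟩ <;> (split_ifs at h1 h3 <;> omega)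
          · right
            refine ⟨?_, ha, ?_, ?_, ?_⟩ <;> (split_ifs at h1 h3 <;> omega)
      · show Win t (h+1) ∧ 0 < h ∧ Win t (h-1) ↔ _
        rw [ih, ih]
        simp only [alive, lo, hi]
        constructor
        · rintro ⟨⟨ha, h1, h2, h3⟩, hpos, -, h4, h5, h6⟩
          exact ⟨⟨ha, by omega⟩, by omega, by omega, by omega⟩
        · rintro ⟨⟨ha, hb⟩, h1, h2, h3⟩
          obtain ⟨hinv1, hinv2⟩ := lo_le_hi t ha
          exact ⟨⟨ha, by omega, by omega, by omega⟩, by omega, ha, by omega, by omega, by omega⟩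

lemma win_zero_iff (v : List Bool) : Win v 0 ↔ (alive v ∧ lo v = 0) := by
  rw [win_iff]
  constructor
  · rintro ⟨ha, h1, -, -⟩; exact ⟨ha, by omega⟩
  · rintro ⟨ha, h1⟩
    have := lo_le_hi v ha
    exact ⟨ha, by omega, by omega, by omega⟩

end WDyck
namespace WDyck

lemma repl_merge {α : Type*} (a : α) (m n : ℕ) (t : List α) :
    List.replicate m a ++ (List.replicate n a ++ t) = List.replicate (m+n) a ++ t := by
  rw [← List.append_assoc, ← List.replicate_add]

lemma repl_merge' {α : Type*} (a : α) (m n : ℕ) :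
    List.replicate m a ++ List.replicate n a = List.replicate (m+n) a :=
  (List.replicate_add m n a).symm

lemma alive_repA : ∀ (n : ℕ) (v : List Bool), alive (List.replicate n false ++ v) ↔ alive v := by
  intro n
  induction n with
  | zero => simp
  | succ n ih =>
      intro v
      rw [List.replicate_succ, List.cons_append]
      show alive (List.replicate n false ++ v) ↔ _
      exact ih v

lemma hi_repA : ∀ (n : ℕ) (v : List Bool), hi (List.replicate n false ++ v) = hi v + n := by
  intro n
  induction n with
  | zero => simp
  | succ n ih =>
      intro v
      rw [List.replicate_succ, List.cons_append]
      show hi (List.replicate n false ++ v) + 1 = hi v + (n+1)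
      rw [ih v]; omega

lemma lo_repA : ∀ (n : ℕ) (v : List Bool),
    lo (List.replicate n false ++ v) = if lo v ≤ n then (lo v + n) % 2 else lo v - n := by
  intro n
  induction n with
  | zero => intro v; simp; omega
  | succ n ih =>
      intro v
      rw [List.replicate_succ, List.cons_append]
      show (if lo (List.replicate n false ++ v) = 0 then 1 else lo (List.replicate n false ++ v) - 1) = _
      rw [ih v]
      split_ifs <;> omega

lemma lo_repB : ∀ (n : ℕ) (v : List Bool), lo (List.replicate n true ++ v) = lo v + n := by
  intro n
  induction n with
  | zero => simp
  | succ n ih =>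
      intro v
      rw [List.replicate_succ, List.cons_append]
      show lo (List.replicate n true ++ v) + 1 = lo v + (n+1)
      rw [ih v]; omega

lemma hi_repB : ∀ (n : ℕ) (v : List Bool), hi (List.replicate n true ++ v) = hi v - n := by
  intro n
  induction n with
  | zero => simp
  | succ n ih =>
      intro v
      rw [List.replicate_succ, List.cons_append]
      show hi (List.replicate n true ++ v) - 1 = hi v - (n+1)
      rw [ih v]
      omega

lemma alive_repB : ∀ (n : ℕ) (v : List Bool),
    alive (List.replicate n true ++ v) ↔ (alive v ∧ lo v + 2*n ≤ hi v) := by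
  intro n
  induction n with
  | zero =>
      intro v
      simp only [List.replicate, List.nil_append, Nat.mul_zero, Nat.add_zero]
      constructor
      · intro h; exact ⟨h, (lo_le_hi v h).1⟩
      · rintro ⟨h, -⟩; exact h
  | succ n ih =>
      intro v
      rw [List.replicate_succ, List.cons_append]
      show alive (List.replicate n true ++ v) ∧
          lo (List.replicate n true ++ v) + 2 ≤ hi (List.replicate n true ++ v) ↔ _
      rw [ih v, lo_repB, hi_repB]
      constructor
      · rintro ⟨⟨ha, h1⟩, h2⟩; exact ⟨ha, by omega⟩
      · rintro ⟨ha, h1⟩; exact ⟨⟨ha, by omega⟩, by omega⟩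

lemma alive_nil : alive ([] : List Bool) := trivial
lemma lo_nil : lo ([] : List Bool) = 0 := rfl
lemma hi_nil : hi ([] : List Bool) = 0 := rfl

/-- Membership criterion for three-block words. -/
lemma win_bw (a b c : ℕ) :
    Win (List.replicate a false ++ (List.replicate b true ++ List.replicate c false)) 0 ↔
      (b + c % 2 ≤ a ∧ c % 2 + 2*b ≤ c ∧ (a + b + c) % 2 = 0) := by
  have hC : List.replicate c false = List.replicate c false ++ [] := by simp
  have aliveC : alive (List.replicate c false) := by
    rw [hC, alive_repA]; exact alive_nil
  have loC : lo (List.replicate c false) = c % 2 := by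
    rw [hC, lo_repA]; simp [lo_nil]
  have hiC : hi (List.replicate c false) = c := by
    rw [hC, hi_repA]; simp [hi_nil]
  rw [win_zero_iff, alive_repA, alive_repB, lo_repA, lo_repB, loC, hiC]
  constructor
  · rintro ⟨⟨-, h1⟩, h2⟩
    split_ifs at h2 <;> omega
  · rintro ⟨h1, h2, h3⟩
    refine ⟨⟨aliveC, by omega⟩, ?_⟩
    split_ifs <;> omega

/-- States of the DFA recognising `A*B*A*`. -/
inductive Q4 : Type
  | q0 | q1 | q2 | q3
  deriving DecidableEq

def q4List : List Q4 := [Q4.q0, Q4.q1, Q4.q2, Q4.q3]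

lemma q4_mem : ∀ q : Q4, q ∈ q4List := by intro q; cases q <;> simp [q4List]

/-- Transition function of the DFA recognising `A*B*A*`. -/
def δ4 : Q4 → Bool → Q4
  | Q4.q0, false => Q4.q0
  | Q4.q0, true => Q4.q1
  | Q4.q1, false => Q4.q2
  | Q4.q1, true => Q4.q1
  | Q4.q2, false => Q4.q2
  | Q4.q2, true => Q4.q3
  | Q4.q3, _ => Q4.q3

lemma run_fix (q : Q4) (b : Bool) (hfix : δ4 q b = q) :
    ∀ (n : ℕ) (w : List Bool), List.foldl δ4 q (List.replicate n b ++ w) = List.foldl δ4 q w := by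
  intro n
  induction n with
  | zero => simp
  | succ n ih =>
      intro w
      rw [List.replicate_succ, List.cons_append, List.foldl_cons, hfix]
      exact ih w

lemma run_q3 : ∀ w : List Bool, List.foldl δ4 Q4.q3 w = Q4.q3 := by
  intro w
  induction w with
  | nil => rfl
  | cons b t ih => rw [List.foldl_cons, show δ4 Q4.q3 b = Q4.q3 from by cases b <;> rfl]; exact ih

/-- Running the `A*B*A*` DFA on the witness word ends in `q2`. -/
lemma run_witness (a b c : ℕ) (hb : 1 ≤ b) (hc : 1 ≤ c) :
    List.foldl δ4 Q4.q0 (List.replicate a false ++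
      (List.replicate b true ++ List.replicate c false)) = Q4.q2 := by
  obtain ⟨b', rfl⟩ : ∃ b', b = b' + 1 := ⟨b - 1, by omega⟩
  obtain ⟨c', rfl⟩ : ∃ c', c = c' + 1 := ⟨c - 1, by omega⟩
  rw [run_fix Q4.q0 false rfl]
  rw [show (b' + 1) = 1 + b' from by omega, List.replicate_add, List.append_assoc]
  rw [show List.replicate 1 true = [true] from rfl]
  rw [show List.foldl δ4 Q4.q0 ([true] ++ (List.replicate b' true ++ List.replicate (c'+1) false))
      = List.foldl δ4 Q4.q1 (List.replicate b' true ++ List.replicate (c'+1) false) from rfl]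
  rw [run_fix Q4.q1 true rfl]
  rw [show (c' + 1) = 1 + c' from by omega, List.replicate_add]
  rw [show List.replicate 1 false = [false] from rfl]
  rw [show List.foldl δ4 Q4.q1 ([false] ++ List.replicate c' false)
      = List.foldl δ4 Q4.q2 (List.replicate c' false) from rfl]
  rw [show List.replicate c' false = List.replicate c' false ++ [] from by simp,
    run_fix Q4.q2 false rfl]
  rfl

/-- Any word with nonempty blocks `B`, `A`, `B` in a row is rejected. -/
lemma run_kill (a b c d : ℕ) (hb : 1 ≤ b) (hc : 1 ≤ c) (hd : 1 ≤ d) (rest : List Bool) :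
    List.foldl δ4 Q4.q0 (List.replicate a false ++ (List.replicate b true ++
      (List.replicate c false ++ (List.replicate d true ++ rest)))) = Q4.q3 := by
  obtain ⟨b', rfl⟩ : ∃ b', b = b' + 1 := ⟨b - 1, by omega⟩
  obtain ⟨c', rfl⟩ : ∃ c', c = c' + 1 := ⟨c - 1, by omega⟩
  obtain ⟨d', rfl⟩ : ∃ d', d = d' + 1 := ⟨d - 1, by omega⟩
  rw [run_fix Q4.q0 false rfl]
  rw [show (b' + 1) = 1 + b' from by omega, List.replicate_add, List.append_assoc]
  rw [show List.foldl δ4 Q4.q0 (List.replicate 1 true ++ (List.replicate b' true ++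
      (List.replicate (c'+1) false ++ (List.replicate (d'+1) true ++ rest))))
      = List.foldl δ4 Q4.q1 (List.replicate b' true ++
      (List.replicate (c'+1) false ++ (List.replicate (d'+1) true ++ rest))) from rfl]
  rw [run_fix Q4.q1 true rfl]
  rw [show (c' + 1) = 1 + c' from by omega, List.replicate_add, List.append_assoc]
  rw [show List.foldl δ4 Q4.q1 (List.replicate 1 false ++ (List.replicate c' false ++
      (List.replicate (d'+1) true ++ rest)))
      = List.foldl δ4 Q4.q2 (List.replicate c' false ++
      (List.replicate (d'+1) true ++ rest)) from rfl]
  rw [run_fix Q4.q2 false rfl]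
  rw [show (d' + 1) = 1 + d' from by omega, List.replicate_add, List.append_assoc]
  rw [show List.foldl δ4 Q4.q2 (List.replicate 1 true ++ (List.replicate d' true ++ rest))
      = List.foldl δ4 Q4.q3 (List.replicate d' true ++ rest) from rfl]
  rw [run_fix Q4.q3 true rfl]
  exact run_q3 rest

end WDyck
namespace WDyck

lemma decomp5 {α : Type*} {u v x y z u' v' x' y' z' : List α}
    (h : u ++ v ++ x ++ y ++ z = u' ++ v' ++ x' ++ y' ++ z')
    (h1 : u.length = u'.length) (h2 : v.length = v'.length) (h3 : x.length = x'.length)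
    (h4 : y.length = y'.length) : u = u' ∧ v = v' ∧ x = x' ∧ y = y' ∧ z = z' := by
  have hz' : z.length = z'.length := by
    have := congrArg List.length h
    simp only [List.length_append] at this
    omega
  obtain ⟨h, hz⟩ := List.append_inj' h hz'
  obtain ⟨h, hy⟩ := List.append_inj' h h4
  obtain ⟨h, hx⟩ := List.append_inj' h h3
  obtain ⟨hu, hv⟩ := List.append_inj' h h2
  exact ⟨hu, hv, hx, hy, hz⟩

lemma repW_zero {α : Type*} (v : List α) : repW 0 v = [] := rfl
lemma repW_two {α : Type*} (v : List α) : repW 2 v = v ++ (v ++ []) := rfl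

lemma bw3_congr {a b c a' b' c' : ℕ} (h1 : a = a') (h2 : b = b') (h3 : c = c') :
    List.replicate a false ++ (List.replicate b true ++ List.replicate c false) =
    List.replicate a' false ++ (List.replicate b' true ++ List.replicate c' false) := by
  subst h1; subst h2; subst h3; rfl

lemma bw5_congr {a b c d e a' b' c' d' e' : ℕ} (h1 : a = a') (h2 : b = b') (h3 : c = c')
    (h4 : d = d') (h5 : e = e') :
    List.replicate a false ++ (List.replicate b true ++ (List.replicate c false ++
      (List.replicate d true ++ List.replicate e false))) =
    List.replicate a' false ++ (List.replicate b' true ++ (List.replicate c' false ++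
      (List.replicate d' true ++ List.replicate e' false))) := by
  subst h1; subst h2; subst h3; subst h4; subst h5; rfl

end WDyck
namespace WDyck
set_option maxHeartbeats 3200000 in
theorem not_cf_main :
    ¬ Language.IsContextFree (winningSet {v : List Bool | IsDyck v} : Language Bool) := by
  classical
  rintro ⟨g₀, hg⟩
  obtain ⟨N, hB1, hpump⟩ := cfpump (prodG g₀ δ4 q4List (Q4.q0, g₀.initial, Q4.q2))
      (Q4.q0, g₀.initial, Q4.q2)
  have hgen_iff : ∀ uu : List Bool,
      (∃ n, Gen (prodG g₀ δ4 q4List (Q4.q0, g₀.initial, Q4.q2)) n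
        [Symbol.nonterminal (Q4.q0, g₀.initial, Q4.q2)] uu) ↔
      (Win uu 0 ∧ List.foldl δ4 Q4.q0 uu = Q4.q2) := by
    intro uu
    rw [prod_iff g₀ δ4 q4List q4_mem]
    constructor
    · rintro ⟨⟨m, hm⟩, hrun⟩
      have hmem : uu ∈ g₀.language := (g₀.mem_language_iff uu).mpr (Gen.derives hm)
      rw [hg] at hmem
      have hmem2 : uu ∈ {w | Win w 0} := by rw [← winningSet_eq_win]; exact hmem
      exact ⟨hmem2, hrun⟩
    · rintro ⟨hwinu, hrun⟩
      refine ⟨?_, hrun⟩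
      have hmem : uu ∈ winningSet {v : List Bool | IsDyck v} := by
        rw [winningSet_eq_win]; exact hwinu
      rw [← hg] at hmem
      exact exists_gen_of_derives ((g₀.mem_language_iff uu).mp hmem)
  have hwit : ∃ n, Gen (prodG g₀ δ4 q4List (Q4.q0, g₀.initial, Q4.q2)) n
      [Symbol.nonterminal (Q4.q0, g₀.initial, Q4.q2)]
      (List.replicate N false ++ (List.replicate N true ++ List.replicate (2*N) false)) := by
    rw [hgen_iff]
    exact ⟨(win_bw N N (2*N)).mpr (by omega), run_witness N N (2*N) hB1 (by omega)⟩
  obtain ⟨u, v, x, y, z, hdec, hvy, hwin, hpumps⟩ := hpump _ hwit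
    (by simp only [List.length_append, List.length_replicate]; omega)
  have hmemk : ∀ k, Win (u ++ repW k v ++ x ++ repW k y ++ z) 0 ∧
      List.foldl δ4 Q4.q0 (u ++ repW k v ++ x ++ repW k y ++ z) = Q4.q2 :=
    fun k => (hgen_iff _).mp (hpumps k)
  have htot : u.length + v.length + x.length + y.length + z.length = 4*N := by
    have hl := congrArg List.length hdec
    simp only [List.length_append, List.length_replicate] at hl
    omega
  have hwl : v.length + x.length + y.length ≤ N := by
    have hl := hwin
    simp only [List.length_append] at hl
    omega
  have hvy1 : 1 ≤ v.length + y.length := by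
    rcases hvy with h | h
    · have := List.length_pos_iff.mpr h; omega
    · have := List.length_pos_iff.mpr h; omega
  by_cases hc1 : u.length + v.length + x.length + y.length ≤ N
  · have hwid : (List.replicate N false ++ (List.replicate N true ++ List.replicate (2*N) false)) =
        (List.replicate (u.length) false) ++ (List.replicate (v.length) false) ++ (List.replicate (x.length) false) ++ (List.replicate (y.length) false) ++ (List.replicate (N - (u.length + v.length + x.length + y.length)) false ++ (List.replicate (N) true ++ List.replicate (2*N) false)) := by
      simp only [repW_zero, repW_two, List.replicate_zero, List.append_nil, List.nil_append,
        List.append_assoc, repl_merge, repl_merge', List.length_replicate, List.length_append]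
      exact bw3_congr (by omega) (by omega) (by omega)
    obtain ⟨hu, hv, hx, hy, hz⟩ := decomp5 (hdec.symm.trans hwid)
      (by simp only [List.length_append, List.length_replicate]; try omega)
      (by simp only [List.length_append, List.length_replicate]; try omega)
      (by simp only [List.length_append, List.length_replicate]; try omega)
      (by simp only [List.length_append, List.length_replicate]; try omega)
    have hW := (hmemk 0).1
    have heq : u ++ repW 0 v ++ x ++ repW 0 y ++ z =
        List.replicate (N - (v.length + y.length)) false ++ (List.replicate (N) true ++ List.replicate (2*N) false) := by
      rw [hu, hv, hx, hy, hz]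
      simp only [repW_zero, repW_two, List.replicate_zero, List.append_nil, List.nil_append,
        List.append_assoc, repl_merge, repl_merge', List.length_replicate, List.length_append]
      exact bw3_congr (by omega) (by omega) (by omega)
    rw [heq, win_bw] at hW
    omega
  · by_cases hc3 : 2*N ≤ u.length
    · have hwid : (List.replicate N false ++ (List.replicate N true ++ List.replicate (2*N) false)) =
          (List.replicate (N) false ++ List.replicate (N) true ++ List.replicate (u.length - 2*N) false) ++ (List.replicate (v.length) false) ++ (List.replicate (x.length) false) ++ (List.replicate (y.length) false) ++ (List.replicate (z.length) false) := by
        simp only [repW_zero, repW_two, List.replicate_zero, List.append_nil, List.nil_append,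
          List.append_assoc, repl_merge, repl_merge', List.length_replicate, List.length_append]
        exact bw3_congr (by omega) (by omega) (by omega)
      obtain ⟨hu, hv, hx, hy, hz⟩ := decomp5 (hdec.symm.trans hwid)
        (by simp only [List.length_append, List.length_replicate]; try omega)
        (by simp only [List.length_append, List.length_replicate]; try omega)
        (by simp only [List.length_append, List.length_replicate]; try omega)
        (by simp only [List.length_append, List.length_replicate]; try omega)
      have hW := (hmemk 0).1
      have heq : u ++ repW 0 v ++ x ++ repW 0 y ++ z =
          List.replicate (N) false ++ (List.replicate (N) true ++ List.replicate (2*N - (v.length + y.length)) false) := by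
        rw [hu, hv, hx, hy, hz]
        simp only [repW_zero, repW_two, List.replicate_zero, List.append_nil, List.nil_append,
          List.append_assoc, repl_merge, repl_merge', List.length_replicate, List.length_append]
        exact bw3_congr (by omega) (by omega) (by omega)
      rw [heq, win_bw] at hW
      omega
    · by_cases hc5 : 2*N < u.length + v.length + x.length + y.length
      · have h5u : N < u.length := by omega
        by_cases h5a : 2*N ≤ u.length + v.length
        · have hwid : (List.replicate N false ++ (List.replicate N true ++ List.replicate (2*N) false)) =
              (List.replicate (N) false ++ List.replicate (u.length - N) true) ++ (List.replicate (2*N - u.length) true ++ List.replicate (u.length + v.length - 2*N) false) ++ (List.replicate (x.length) false) ++ (List.replicate (y.length) false) ++ (List.replicate (z.length) false) := by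
            simp only [repW_zero, repW_two, List.replicate_zero, List.append_nil, List.nil_append,
              List.append_assoc, repl_merge, repl_merge', List.length_replicate, List.length_append]
            exact bw3_congr (by omega) (by omega) (by omega)
          obtain ⟨hu, hv, hx, hy, hz⟩ := decomp5 (hdec.symm.trans hwid)
            (by simp only [List.length_append, List.length_replicate]; try omega)
            (by simp only [List.length_append, List.length_replicate]; try omega)
            (by simp only [List.length_append, List.length_replicate]; try omega)
            (by simp only [List.length_append, List.length_replicate]; try omega)
          by_cases hqq : 1 ≤ u.length + v.length - 2*N
          · have hR := (hmemk 2).2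
            have heq : u ++ repW 2 v ++ x ++ repW 2 y ++ z =
                List.replicate (N) false ++ (List.replicate ((u.length - N) + (2*N - u.length)) true ++ (List.replicate (u.length + v.length - 2*N) false ++ (List.replicate (2*N - u.length) true ++ List.replicate ((u.length + v.length - 2*N) + x.length + 2*y.length + z.length) false))) := by
              rw [hu, hv, hx, hy, hz]
              simp only [repW_zero, repW_two, List.replicate_zero, List.append_nil, List.nil_append,
                List.append_assoc, repl_merge, repl_merge', List.length_replicate, List.length_append]
              exact bw5_congr (by omega) (by omega) (by omega) (by omega) (by omega)
            rw [heq] at hR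
            rw [run_kill (N) ((u.length - N) + (2*N - u.length)) (u.length + v.length - 2*N) (2*N - u.length) (by omega) (by omega) (by omega)
              (List.replicate ((u.length + v.length - 2*N) + x.length + 2*y.length + z.length) false)] at hR
            exact Q4.noConfusion hR
          · rw [show (u.length + v.length - 2*N) = 0 from by omega, List.replicate_zero, List.append_nil] at hv
            have hW := (hmemk 2).1
            have heq : u ++ repW 2 v ++ x ++ repW 2 y ++ z =
                List.replicate (N) false ++ (List.replicate (N + (2*N - u.length)) true ++ List.replicate (2*N + y.length) false) := by
              rw [hu, hv, hx, hy, hz]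
              simp only [repW_zero, repW_two, List.replicate_zero, List.append_nil, List.nil_append,
                List.append_assoc, repl_merge, repl_merge', List.length_replicate, List.length_append]
              exact bw3_congr (by omega) (by omega) (by omega)
            rw [heq, win_bw] at hW
            omega
        · by_cases h5b : 2*N ≤ u.length + v.length + x.length
          · have hwid : (List.replicate N false ++ (List.replicate N true ++ List.replicate (2*N) false)) =
                (List.replicate (N) false ++ List.replicate (u.length - N) true) ++ (List.replicate (v.length) true) ++ (List.replicate (2*N - (u.length + v.length)) true ++ List.replicate (u.length + v.length + x.length - 2*N) false) ++ (List.replicate (y.length) false) ++ (List.replicate (z.length) false) := by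
              simp only [repW_zero, repW_two, List.replicate_zero, List.append_nil, List.nil_append,
                List.append_assoc, repl_merge, repl_merge', List.length_replicate, List.length_append]
              exact bw3_congr (by omega) (by omega) (by omega)
            obtain ⟨hu, hv, hx, hy, hz⟩ := decomp5 (hdec.symm.trans hwid)
              (by simp only [List.length_append, List.length_replicate]; try omega)
              (by simp only [List.length_append, List.length_replicate]; try omega)
              (by simp only [List.length_append, List.length_replicate]; try omega)
              (by simp only [List.length_append, List.length_replicate]; try omega)
            by_cases hdv : 1 ≤ v.length
            · have hW := (hmemk 2).1
              have heq : u ++ repW 2 v ++ x ++ repW 2 y ++ z =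
                  List.replicate (N) false ++ (List.replicate (N + v.length) true ++ List.replicate (2*N + y.length) false) := by
                rw [hu, hv, hx, hy, hz]
                simp only [repW_zero, repW_two, List.replicate_zero, List.append_nil, List.nil_append,
                  List.append_assoc, repl_merge, repl_merge', List.length_replicate, List.length_append]
                exact bw3_congr (by omega) (by omega) (by omega)
              rw [heq, win_bw] at hW
              omega
            · rw [show (v.length) = 0 from by omega, List.replicate_zero] at hv
              have hW := (hmemk 0).1
              have heq : u ++ repW 0 v ++ x ++ repW 0 y ++ z =
                  List.replicate (N) false ++ (List.replicate (N) true ++ List.replicate (2*N - y.length) false) := by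
                rw [hu, hv, hx, hy, hz]
                simp only [repW_zero, repW_two, List.replicate_zero, List.append_nil, List.nil_append,
                  List.append_assoc, repl_merge, repl_merge', List.length_replicate, List.length_append]
                exact bw3_congr (by omega) (by omega) (by omega)
              rw [heq, win_bw] at hW
              omega
          · have hwid : (List.replicate N false ++ (List.replicate N true ++ List.replicate (2*N) false)) =
                (List.replicate (N) false ++ List.replicate (u.length - N) true) ++ (List.replicate (v.length) true) ++ (List.replicate (x.length) true) ++ (List.replicate (2*N - (u.length + v.length + x.length)) true ++ List.replicate ((u.length + v.length + x.length + y.length) - 2*N) false) ++ (List.replicate (z.length) false) := by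
              simp only [repW_zero, repW_two, List.replicate_zero, List.append_nil, List.nil_append,
                List.append_assoc, repl_merge, repl_merge', List.length_replicate, List.length_append]
              exact bw3_congr (by omega) (by omega) (by omega)
            obtain ⟨hu, hv, hx, hy, hz⟩ := decomp5 (hdec.symm.trans hwid)
              (by simp only [List.length_append, List.length_replicate]; try omega)
              (by simp only [List.length_append, List.length_replicate]; try omega)
              (by simp only [List.length_append, List.length_replicate]; try omega)
              (by simp only [List.length_append, List.length_replicate]; try omega)
            have hR := (hmemk 2).2
            have heq : u ++ repW 2 v ++ x ++ repW 2 y ++ z =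
                List.replicate (N) false ++ (List.replicate ((u.length - N) + 2*v.length + x.length + (2*N - (u.length + v.length + x.length))) true ++ (List.replicate ((u.length + v.length + x.length + y.length) - 2*N) false ++ (List.replicate (2*N - (u.length + v.length + x.length)) true ++ List.replicate (((u.length + v.length + x.length + y.length) - 2*N) + z.length) false))) := by
              rw [hu, hv, hx, hy, hz]
              simp only [repW_zero, repW_two, List.replicate_zero, List.append_nil, List.nil_append,
                List.append_assoc, repl_merge, repl_merge', List.length_replicate, List.length_append]
              exact bw5_congr (by omega) (by omega) (by omega) (by omega) (by omega)
            rw [heq] at hR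
            rw [run_kill (N) ((u.length - N) + 2*v.length + x.length + (2*N - (u.length + v.length + x.length))) ((u.length + v.length + x.length + y.length) - 2*N) (2*N - (u.length + v.length + x.length)) (by omega) (by omega) (by omega)
              (List.replicate (((u.length + v.length + x.length + y.length) - 2*N) + z.length) false)] at hR
            exact Q4.noConfusion hR
      · by_cases hc2 : N ≤ u.length
        · have hwid : (List.replicate N false ++ (List.replicate N true ++ List.replicate (2*N) false)) =
              (List.replicate (N) false ++ List.replicate (u.length - N) true) ++ (List.replicate (v.length) true) ++ (List.replicate (x.length) true) ++ (List.replicate (y.length) true) ++ (List.replicate (2*N - (u.length + v.length + x.length + y.length)) true ++ List.replicate (2*N) false) := by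
            simp only [repW_zero, repW_two, List.replicate_zero, List.append_nil, List.nil_append,
              List.append_assoc, repl_merge, repl_merge', List.length_replicate, List.length_append]
            exact bw3_congr (by omega) (by omega) (by omega)
          obtain ⟨hu, hv, hx, hy, hz⟩ := decomp5 (hdec.symm.trans hwid)
            (by simp only [List.length_append, List.length_replicate]; try omega)
            (by simp only [List.length_append, List.length_replicate]; try omega)
            (by simp only [List.length_append, List.length_replicate]; try omega)
            (by simp only [List.length_append, List.length_replicate]; try omega)
          have hW := (hmemk 2).1
          have heq : u ++ repW 2 v ++ x ++ repW 2 y ++ z =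
              List.replicate (N) false ++ (List.replicate (N + v.length + y.length) true ++ List.replicate (2*N) false) := by
            rw [hu, hv, hx, hy, hz]
            simp only [repW_zero, repW_two, List.replicate_zero, List.append_nil, List.nil_append,
              List.append_assoc, repl_merge, repl_merge', List.length_replicate, List.length_append]
            exact bw3_congr (by omega) (by omega) (by omega)
          rw [heq, win_bw] at hW
          omega
        · by_cases h4a : N ≤ u.length + v.length
          · have hwid : (List.replicate N false ++ (List.replicate N true ++ List.replicate (2*N) false)) =
                (List.replicate (u.length) false) ++ (List.replicate (N - u.length) false ++ List.replicate (u.length + v.length - N) true) ++ (List.replicate (x.length) true) ++ (List.replicate (y.length) true) ++ (List.replicate (2*N - (u.length + v.length + x.length + y.length)) true ++ List.replicate (2*N) false) := by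
              simp only [repW_zero, repW_two, List.replicate_zero, List.append_nil, List.nil_append,
                List.append_assoc, repl_merge, repl_merge', List.length_replicate, List.length_append]
              exact bw3_congr (by omega) (by omega) (by omega)
            obtain ⟨hu, hv, hx, hy, hz⟩ := decomp5 (hdec.symm.trans hwid)
              (by simp only [List.length_append, List.length_replicate]; try omega)
              (by simp only [List.length_append, List.length_replicate]; try omega)
              (by simp only [List.length_append, List.length_replicate]; try omega)
              (by simp only [List.length_append, List.length_replicate]; try omega)
            by_cases hqq : 1 ≤ u.length + v.length - N
            · have hR := (hmemk 2).2
              have heq : u ++ repW 2 v ++ x ++ repW 2 y ++ z =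
                  List.replicate (N) false ++ (List.replicate (u.length + v.length - N) true ++ (List.replicate (N - u.length) false ++ (List.replicate ((u.length + v.length - N) + x.length + 2*y.length + (2*N - (u.length + v.length + x.length + y.length))) true ++ List.replicate (2*N) false))) := by
                rw [hu, hv, hx, hy, hz]
                simp only [repW_zero, repW_two, List.replicate_zero, List.append_nil, List.nil_append,
                  List.append_assoc, repl_merge, repl_merge', List.length_replicate, List.length_append]
                exact bw5_congr (by omega) (by omega) (by omega) (by omega) (by omega)
              rw [heq] at hR
              rw [run_kill (N) (u.length + v.length - N) (N - u.length) ((u.length + v.length - N) + x.length + 2*y.length + (2*N - (u.length + v.length + x.length + y.length))) (by omega) (by omega) (by omega)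
                (List.replicate (2*N) false)] at hR
              exact Q4.noConfusion hR
            · by_cases hdy : 1 ≤ y.length
              · rw [show (u.length + v.length - N) = 0 from by omega, List.replicate_zero, List.append_nil] at hv
                have hW := (hmemk 2).1
                have heq : u ++ repW 2 v ++ x ++ repW 2 y ++ z =
                    List.replicate (N + (N - u.length)) false ++ (List.replicate (N + y.length) true ++ List.replicate (2*N) false) := by
                  rw [hu, hv, hx, hy, hz]
                  simp only [repW_zero, repW_two, List.replicate_zero, List.append_nil, List.nil_append,
                    List.append_assoc, repl_merge, repl_merge', List.length_replicate, List.length_append]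
                  exact bw3_congr (by omega) (by omega) (by omega)
                rw [heq, win_bw] at hW
                omega
              · rw [show (u.length + v.length - N) = 0 from by omega, List.replicate_zero, List.append_nil] at hv
                rw [show (y.length) = 0 from by omega, List.replicate_zero] at hy
                have hW := (hmemk 0).1
                have heq : u ++ repW 0 v ++ x ++ repW 0 y ++ z =
                    List.replicate (u.length) false ++ (List.replicate (N) true ++ List.replicate (2*N) false) := by
                  rw [hu, hv, hx, hy, hz]
                  simp only [repW_zero, repW_two, List.replicate_zero, List.append_nil, List.nil_append,
                    List.append_assoc, repl_merge, repl_merge', List.length_replicate, List.length_append]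
                  exact bw3_congr (by omega) (by omega) (by omega)
                rw [heq, win_bw] at hW
                omega
          · by_cases h4b : N ≤ u.length + v.length + x.length
            · have hwid : (List.replicate N false ++ (List.replicate N true ++ List.replicate (2*N) false)) =
                  (List.replicate (u.length) false) ++ (List.replicate (v.length) false) ++ (List.replicate (N - (u.length + v.length)) false ++ List.replicate (u.length + v.length + x.length - N) true) ++ (List.replicate (y.length) true) ++ (List.replicate (2*N - (u.length + v.length + x.length + y.length)) true ++ List.replicate (2*N) false) := by
                simp only [repW_zero, repW_two, List.replicate_zero, List.append_nil, List.nil_append,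
                  List.append_assoc, repl_merge, repl_merge', List.length_replicate, List.length_append]
                exact bw3_congr (by omega) (by omega) (by omega)
              obtain ⟨hu, hv, hx, hy, hz⟩ := decomp5 (hdec.symm.trans hwid)
                (by simp only [List.length_append, List.length_replicate]; try omega)
                (by simp only [List.length_append, List.length_replicate]; try omega)
                (by simp only [List.length_append, List.length_replicate]; try omega)
                (by simp only [List.length_append, List.length_replicate]; try omega)
              by_cases hdy : 1 ≤ y.length
              · have hW := (hmemk 2).1
                have heq : u ++ repW 2 v ++ x ++ repW 2 y ++ z =
                    List.replicate (N + v.length) false ++ (List.replicate (N + y.length) true ++ List.replicate (2*N) false) := by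
                  rw [hu, hv, hx, hy, hz]
                  simp only [repW_zero, repW_two, List.replicate_zero, List.append_nil, List.nil_append,
                    List.append_assoc, repl_merge, repl_merge', List.length_replicate, List.length_append]
                  exact bw3_congr (by omega) (by omega) (by omega)
                rw [heq, win_bw] at hW
                omega
              · rw [show (y.length) = 0 from by omega, List.replicate_zero] at hy
                have hW := (hmemk 0).1
                have heq : u ++ repW 0 v ++ x ++ repW 0 y ++ z =
                    List.replicate (N - v.length) false ++ (List.replicate (N) true ++ List.replicate (2*N) false) := by
                  rw [hu, hv, hx, hy, hz]
                  simp only [repW_zero, repW_two, List.replicate_zero, List.append_nil, List.nil_append,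
                    List.append_assoc, repl_merge, repl_merge', List.length_replicate, List.length_append]
                  exact bw3_congr (by omega) (by omega) (by omega)
                rw [heq, win_bw] at hW
                omega
            · have hwid : (List.replicate N false ++ (List.replicate N true ++ List.replicate (2*N) false)) =
                  (List.replicate (u.length) false) ++ (List.replicate (v.length) false) ++ (List.replicate (x.length) false) ++ (List.replicate (N - (u.length + v.length + x.length)) false ++ List.replicate ((u.length + v.length + x.length + y.length) - N) true) ++ (List.replicate (2*N - (u.length + v.length + x.length + y.length)) true ++ List.replicate (2*N) false) := by
                simp only [repW_zero, repW_two, List.replicate_zero, List.append_nil, List.nil_append,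
                  List.append_assoc, repl_merge, repl_merge', List.length_replicate, List.length_append]
                exact bw3_congr (by omega) (by omega) (by omega)
              obtain ⟨hu, hv, hx, hy, hz⟩ := decomp5 (hdec.symm.trans hwid)
                (by simp only [List.length_append, List.length_replicate]; try omega)
                (by simp only [List.length_append, List.length_replicate]; try omega)
                (by simp only [List.length_append, List.length_replicate]; try omega)
                (by simp only [List.length_append, List.length_replicate]; try omega)
              have hR := (hmemk 2).2
              have heq : u ++ repW 2 v ++ x ++ repW 2 y ++ z =
                  List.replicate (u.length + 2*v.length + x.length + (N - (u.length + v.length + x.length))) false ++ (List.replicate ((u.length + v.length + x.length + y.length) - N) true ++ (List.replicate (N - (u.length + v.length + x.length)) false ++ (List.replicate (((u.length + v.length + x.length + y.length) - N) + (2*N - (u.length + v.length + x.length + y.length))) true ++ List.replicate (2*N) false))) := by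
                rw [hu, hv, hx, hy, hz]
                simp only [repW_zero, repW_two, List.replicate_zero, List.append_nil, List.nil_append,
                  List.append_assoc, repl_merge, repl_merge', List.length_replicate, List.length_append]
                exact bw5_congr (by omega) (by omega) (by omega) (by omega) (by omega)
              rw [heq] at hR
              rw [run_kill (u.length + 2*v.length + x.length + (N - (u.length + v.length + x.length))) ((u.length + v.length + x.length + y.length) - N) (N - (u.length + v.length + x.length)) (((u.length + v.length + x.length + y.length) - N) + (2*N - (u.length + v.length + x.length + y.length))) (by omega) (by omega) (by omega)
                (List.replicate (2*N) false)] at hR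
              exact Q4.noConfusion hR

end WDyck


/-- the winning set of the Dyck language is not context-free. -/
theorem winningSet_dyck_not_contextFree :
    ¬ Language.IsContextFree (winningSet {v : List Bool | IsDyck v} : Language Bool) :=
  WDyck.not_cf_main
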